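/- There exists N₀ ∈ ℕ, depending only on Q, α and θ, such that for every N ≥ N₀ the following are equivalent for every pair (M,A) consisting of a representation M of Q on (V_i) and a family A = (A_i : E_i → V_i)_{i∈Q0⁺}: (i) every one-framed subrepresentation of (M,A) has η⁺-value ≤ 0 ((M,A) is η⁺-semi-stable); (ii) every one-framed subrepresentation of (M,A) other than (0,(0)_i) and (k,(V_i)_i) has η⁺-value < 0 ((M,A) is η⁺-stable); (iii) no subrepresentation U of M with U ≠ (V_i)_i satisfies A_i(E_i) ⊆ U_i for all i ∈ Q0⁺ (equivalently, for every j ∈ Q0 the map ⊕_p E_{s(p)} → V_j, (w_p)_p ↦ Σ_p M_p(A_{s(p)}(w_p)), summing over all paths p with source in Q0⁺ and target j, is surjective). -/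

import Mathlib

open Module

section

variable {k Q0 Q1 : Type} [Field k] (src tgt : Q1 → Q0)
  (V : Q0 → Type) [∀ i, AddCommGroup (V i)] [∀ i, Module k (V i)]

/-- `U` is a subrepresentation of the representation `M`. -/
def IsSubrep (M : ∀ a : Q1, V (src a) →ₗ[k] V (tgt a))
    (U : ∀ i : Q0, Submodule k (V i)) : Prop :=
  ∀ a : Q1, ∀ x ∈ U (src a), M a x ∈ U (tgt a)

variable [Fintype Q0] (θ : Q0 → ℤ)

/-- The η⁺-value of a one-framed subrepresentation `(L,U)` for the framing parameter `N`:
`N·|α⁺|·dim L + Σ_{i∈Q0⁺} (θ_i − N)·dim U_i + Σ_{i∉Q0⁺} θ_i·dim U_i`. -/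
noncomputable def EtaPlusVal (N : ℕ) (L : Submodule k k)
    (U : ∀ i : Q0, Submodule k (V i)) : ℤ :=
  (N : ℤ) * (∑ i : {i : Q0 // 0 ≤ θ i}, (finrank k (V i.1) : ℤ)) * (finrank k L : ℤ)
    + ∑ i : {i : Q0 // 0 ≤ θ i}, (θ i.1 - (N : ℤ)) * (finrank k (U i.1) : ℤ)
    + ∑ i : {i : Q0 // ¬ 0 ≤ θ i}, θ i.1 * (finrank k (U i.1) : ℤ)


lemma eta_eq (N : ℕ) (L : Submodule k k) (U : ∀ i : Q0, Submodule k (V i)) :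
    EtaPlusVal V θ N L U =
      (N : ℤ) * ((∑ i : {i : Q0 // 0 ≤ θ i}, (finrank k (V i.1) : ℤ)) * (finrank k L : ℤ)
        - ∑ i : {i : Q0 // 0 ≤ θ i}, (finrank k (U i.1) : ℤ))
      + ∑ i : Q0, θ i * (finrank k (U i) : ℤ) := by
  rw [EtaPlusVal,
    ← Fintype.sum_subtype_add_sum_subtype (fun i => 0 ≤ θ i)
      (fun i => θ i * (finrank k (U i) : ℤ))]
  simp only [sub_mul]
  rw [Finset.sum_sub_distrib, ← Finset.mul_sum]
  ring

end

/-- For `N ≫ 0` the following are equivalent: (i) `(M,A)` is η⁺-semi-stable, (ii) `(M,A)`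
is η⁺-stable, (iii) no subrepresentation `U ≠ (V_i)_i` of `M` contains all the images of
the maps `A_i`, `i ∈ Q0⁺`. -/
theorem statement10 {k Q0 Q1 : Type} [Field k] [Fintype Q0] [Fintype Q1]
    (src tgt : Q1 → Q0)
    (V : Q0 → Type) [∀ i, AddCommGroup (V i)] [∀ i, Module k (V i)]
    [∀ i, FiniteDimensional k (V i)]
    (θ : Q0 → ℤ)
    (hθ : ∑ i : Q0, θ i * (finrank k (V i) : ℤ) = 0)
    (E : {i : Q0 // 0 ≤ θ i} → Type) [∀ i, AddCommGroup (E i)] [∀ i, Module k (E i)]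
    [∀ i, FiniteDimensional k (E i)]
    (hE : ∀ i : {i : Q0 // 0 ≤ θ i}, finrank k (E i) = finrank k (V i.1)) :
    ∃ N₀ : ℕ, ∀ N : ℕ, N₀ ≤ N →
      ∀ (M : ∀ a : Q1, V (src a) →ₗ[k] V (tgt a))
        (A : ∀ i : {i : Q0 // 0 ≤ θ i}, E i →ₗ[k] V i.1),
        ((∀ (L : Submodule k k) (U : ∀ i : Q0, Submodule k (V i)),
            IsSubrep src tgt V M U →
            (L = ⊤ → ∀ i : {i : Q0 // 0 ≤ θ i}, LinearMap.range (A i) ≤ U i.1) →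
            EtaPlusVal V θ N L U ≤ 0)
          ↔
          (∀ (L : Submodule k k) (U : ∀ i : Q0, Submodule k (V i)),
            IsSubrep src tgt V M U →
            (L = ⊤ → ∀ i : {i : Q0 // 0 ≤ θ i}, LinearMap.range (A i) ≤ U i.1) →
            ¬(L = ⊥ ∧ ∀ i, U i = ⊥) → ¬(L = ⊤ ∧ ∀ i, U i = ⊤) →
            EtaPlusVal V θ N L U < 0))
        ∧
        ((∀ (L : Submodule k k) (U : ∀ i : Q0, Submodule k (V i)),
            IsSubrep src tgt V M U →
            (L = ⊤ → ∀ i : {i : Q0 // 0 ≤ θ i}, LinearMap.range (A i) ≤ U i.1) →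
            ¬(L = ⊥ ∧ ∀ i, U i = ⊥) → ¬(L = ⊤ ∧ ∀ i, U i = ⊤) →
            EtaPlusVal V θ N L U < 0)
          ↔
          (¬ ∃ U : ∀ i : Q0, Submodule k (V i),
            IsSubrep src tgt V M U ∧ (¬ ∀ i, U i = ⊤) ∧
            (∀ i : {i : Q0 // 0 ≤ θ i}, LinearMap.range (A i) ≤ U i.1))) := by
  classical
  set B : ℤ := ∑ i : Q0, |θ i| * (finrank k (V i) : ℤ) with hBdef
  have hB0 : 0 ≤ B :=
    Finset.sum_nonneg fun i _ => mul_nonneg (abs_nonneg _) (Int.natCast_nonneg _)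
  refine ⟨B.toNat + 1, fun N hN M A => ?_⟩
  have hNB : B < (N : ℤ) := by
    have h1 : (B.toNat : ℤ) = B := Int.toNat_of_nonneg hB0
    have h2 : ((B.toNat + 1 : ℕ) : ℤ) ≤ (N : ℤ) := by exact_mod_cast hN
    push_cast at h2; omega
  set S : ℤ := ∑ i : {i : Q0 // 0 ≤ θ i}, (finrank k (V i.1) : ℤ) with hSdef
  have hT : ∀ U : ∀ i : Q0, Submodule k (V i),
      |∑ i : Q0, θ i * (finrank k (U i) : ℤ)| ≤ B := by
    intro U
    calc |∑ i : Q0, θ i * (finrank k (U i) : ℤ)|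
        ≤ ∑ i : Q0, |θ i * (finrank k (U i) : ℤ)| := Finset.abs_sum_le_sum_abs _ _
      _ ≤ B := by
          apply Finset.sum_le_sum
          intro i _
          rw [abs_mul, abs_of_nonneg (Int.natCast_nonneg _)]
          exact mul_le_mul_of_nonneg_left
            (by exact_mod_cast Submodule.finrank_le (U i)) (abs_nonneg _)
  have htopbot : (⊤ : Submodule k k) ≠ ⊥ := by
    intro h
    have : (1 : k) ∈ (⊥ : Submodule k k) := h ▸ Submodule.mem_top
    exact one_ne_zero ((Submodule.mem_bot k).mp this)
  have hfrtop : (finrank k (⊤ : Submodule k k) : ℤ) = 1 := by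
    rw [finrank_top, finrank_self]; norm_num
  -- η at (⊤, ⊤)
  have hKeyTopTop : EtaPlusVal V θ N ⊤ (fun i => (⊤ : Submodule k (V i))) = 0 := by
    rw [eta_eq, hfrtop, mul_one]
    simp only [finrank_top]
    rw [← hSdef, sub_self, mul_zero, zero_add, hθ]
  -- η at (⊥, U) ≤ 0, strict when U nonzero
  have hKeyBotLt : ∀ U : ∀ i : Q0, Submodule k (V i), (∃ j, U j ≠ ⊥) →
      EtaPlusVal V θ N ⊥ U < 0 := by
    intro U ⟨j, hj⟩
    rw [eta_eq, finrank_bot, Int.natCast_zero, mul_zero, zero_sub]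
    set d : ℤ := ∑ i : {i : Q0 // 0 ≤ θ i}, (finrank k (U i.1) : ℤ) with hddef
    have hd0 : 0 ≤ d := Finset.sum_nonneg fun i _ => Int.natCast_nonneg _
    by_cases hd : d = 0
    · have hzero : ∀ i : {i : Q0 // 0 ≤ θ i}, U i.1 = ⊥ := by
        intro i
        have := (Finset.sum_eq_zero_iff_of_nonneg
          (fun i _ => Int.natCast_nonneg (finrank k (U i.1)))).mp hd i (Finset.mem_univ i)
        rw [← Submodule.finrank_eq_zero (R := k)]
        exact_mod_cast this
      have hjneg : ¬ 0 ≤ θ j := fun h => hj (hzero ⟨j, h⟩)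
      have hTlt : ∑ i : Q0, θ i * (finrank k (U i) : ℤ) < 0 := by
        have := Finset.sum_lt_sum (s := Finset.univ)
          (f := fun i : Q0 => θ i * (finrank k (U i) : ℤ)) (g := fun _ => (0 : ℤ))
          (by
            intro i _
            by_cases h : 0 ≤ θ i
            · have hU : finrank k (U i) = 0 := by rw [hzero ⟨i, h⟩]; exact finrank_bot k _
              simp [hU]
            · exact mul_nonpos_of_nonpos_of_nonneg (le_of_not_ge h) (Int.natCast_nonneg _))
          ⟨j, Finset.mem_univ j, by
            have h1 : θ j < 0 := lt_of_not_ge hjneg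
            have h2 : (0 : ℤ) < (finrank k (U j) : ℤ) := by
              have : finrank k (U j) ≠ 0 := fun h => hj (Submodule.finrank_eq_zero.mp h)
              exact_mod_cast Nat.pos_of_ne_zero this
            exact mul_neg_of_neg_of_pos h1 h2⟩
        simpa using this
      rw [hd]
      linarith
    · have hd1 : 1 ≤ d := by omega
      have h1 : (N : ℤ) ≤ N * d :=
        le_mul_of_one_le_right (by positivity) hd1
      have h2 := (abs_le.mp (hT U)).2
      have h3 : (N : ℤ) * (-d) = -(N * d) := by ring
      rw [h3]
      linarith
  have hKeyBotLe : ∀ U : ∀ i : Q0, Submodule k (V i), EtaPlusVal V θ N ⊥ U ≤ 0 := by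
    intro U
    by_cases h : ∀ i, U i = ⊥
    · have hU : U = fun i => (⊥ : Submodule k (V i)) := funext h
      rw [hU, eta_eq]
      simp [finrank_bot]
    · push_neg at h
      exact le_of_lt (hKeyBotLt U h)
  -- η at (⊤, U) > 0 when U ≠ ⊤
  have hKeyTop : ∀ U : ∀ i : Q0, Submodule k (V i), (∃ j, U j ≠ ⊤) →
      0 < EtaPlusVal V θ N ⊤ U := by
    intro U ⟨j, hj⟩
    rw [eta_eq, hfrtop, mul_one, ← hSdef]
    set d : ℤ := ∑ i : {i : Q0 // 0 ≤ θ i}, (finrank k (U i.1) : ℤ) with hddef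
    have hdS : d ≤ S :=
      Finset.sum_le_sum fun i _ => by exact_mod_cast Submodule.finrank_le (U i.1)
    by_cases hcase : d = S
    · have htopP : ∀ i : {i : Q0 // 0 ≤ θ i}, U i.1 = ⊤ := by
        intro i
        by_contra hne
        have hlt : (finrank k (U i.1) : ℤ) < (finrank k (V i.1) : ℤ) := by
          exact_mod_cast Submodule.finrank_lt hne
        have := Finset.sum_lt_sum (s := Finset.univ)
          (f := fun i : {i : Q0 // 0 ≤ θ i} => (finrank k (U i.1) : ℤ))
          (g := fun i : {i : Q0 // 0 ≤ θ i} => (finrank k (V i.1) : ℤ))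
          (fun i _ => by exact_mod_cast Submodule.finrank_le (U i.1))
          ⟨i, Finset.mem_univ i, hlt⟩
        rw [← hddef, ← hSdef] at this
        omega
      have hjneg : ¬ 0 ≤ θ j := fun h => hj (htopP ⟨j, h⟩)
      have hpos : 0 < ∑ i : Q0, θ i * ((finrank k (U i) : ℤ) - (finrank k (V i) : ℤ)) := by
        have := Finset.sum_lt_sum (s := Finset.univ)
          (f := fun _ : Q0 => (0 : ℤ))
          (g := fun i : Q0 => θ i * ((finrank k (U i) : ℤ) - (finrank k (V i) : ℤ)))
          (by
            intro i _
            by_cases h : 0 ≤ θ i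
            · have hU : finrank k (U i) = finrank k (V i) := by
                rw [htopP ⟨i, h⟩]; exact finrank_top k _
              simp [hU]
            · exact mul_nonneg_of_nonpos_of_nonpos (le_of_not_ge h)
                (by
                  have : (finrank k (U i) : ℤ) ≤ (finrank k (V i) : ℤ) := by
                    exact_mod_cast Submodule.finrank_le (U i)
                  linarith))
          ⟨j, Finset.mem_univ j, by
            have h1 : θ j < 0 := lt_of_not_ge hjneg
            have h2 : (finrank k (U j) : ℤ) < (finrank k (V j) : ℤ) := by
              exact_mod_cast Submodule.finrank_lt hj
            exact mul_pos_of_neg_of_neg h1 (by linarith)⟩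
        simpa using this
      have hsplit : ∑ i : Q0, θ i * ((finrank k (U i) : ℤ) - (finrank k (V i) : ℤ))
          = (∑ i : Q0, θ i * (finrank k (U i) : ℤ))
            - ∑ i : Q0, θ i * (finrank k (V i) : ℤ) := by
        rw [← Finset.sum_sub_distrib]
        congr 1; funext i; ring
      rw [hsplit, hθ, sub_zero] at hpos
      rw [hcase, sub_self, mul_zero, zero_add]
      exact hpos
    · have hd1 : 1 ≤ S - d := by omega
      have h1 : (N : ℤ) ≤ N * (S - d) :=
        le_mul_of_one_le_right (by positivity) hd1
      have h2 := (abs_le.mp (hT U)).1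
      linarith
  -- the four implications
  have iii_to_i :
      (¬ ∃ U : ∀ i : Q0, Submodule k (V i),
          IsSubrep src tgt V M U ∧ (¬ ∀ i, U i = ⊤) ∧
          (∀ i : {i : Q0 // 0 ≤ θ i}, LinearMap.range (A i) ≤ U i.1)) →
      ∀ (L : Submodule k k) (U : ∀ i : Q0, Submodule k (V i)),
        IsSubrep src tgt V M U →
        (L = ⊤ → ∀ i : {i : Q0 // 0 ≤ θ i}, LinearMap.range (A i) ≤ U i.1) →
        EtaPlusVal V θ N L U ≤ 0 := by
    intro h3 L U hsub hA
    rcases Ideal.eq_bot_or_top (L : Ideal k) with rfl | rfl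
    · exact hKeyBotLe U
    · have hUtop : ∀ i, U i = ⊤ := by
        by_contra hc
        exact h3 ⟨U, hsub, hc, hA rfl⟩
      rw [show U = fun i => (⊤ : Submodule k (V i)) from funext hUtop]
      exact le_of_eq hKeyTopTop
  have iii_to_ii :
      (¬ ∃ U : ∀ i : Q0, Submodule k (V i),
          IsSubrep src tgt V M U ∧ (¬ ∀ i, U i = ⊤) ∧
          (∀ i : {i : Q0 // 0 ≤ θ i}, LinearMap.range (A i) ≤ U i.1)) →
      ∀ (L : Submodule k k) (U : ∀ i : Q0, Submodule k (V i)),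
        IsSubrep src tgt V M U →
        (L = ⊤ → ∀ i : {i : Q0 // 0 ≤ θ i}, LinearMap.range (A i) ≤ U i.1) →
        ¬(L = ⊥ ∧ ∀ i, U i = ⊥) → ¬(L = ⊤ ∧ ∀ i, U i = ⊤) →
        EtaPlusVal V θ N L U < 0 := by
    intro h3 L U hsub hA hnb hnt
    rcases Ideal.eq_bot_or_top (L : Ideal k) with rfl | rfl
    · have : ∃ j, U j ≠ ⊥ := by
        by_contra hc
        push_neg at hc
        exact hnb ⟨rfl, hc⟩
      exact hKeyBotLt U this
    · exfalso
      have hUtop : ∀ i, U i = ⊤ := by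
        by_contra hc
        exact h3 ⟨U, hsub, hc, hA rfl⟩
      exact hnt ⟨rfl, hUtop⟩
  have i_to_iii :
      (∀ (L : Submodule k k) (U : ∀ i : Q0, Submodule k (V i)),
        IsSubrep src tgt V M U →
        (L = ⊤ → ∀ i : {i : Q0 // 0 ≤ θ i}, LinearMap.range (A i) ≤ U i.1) →
        EtaPlusVal V θ N L U ≤ 0) →
      (¬ ∃ U : ∀ i : Q0, Submodule k (V i),
          IsSubrep src tgt V M U ∧ (¬ ∀ i, U i = ⊤) ∧
          (∀ i : {i : Q0 // 0 ≤ θ i}, LinearMap.range (A i) ≤ U i.1)) := by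
    intro h1 ⟨U, hsub, hnt, hA⟩
    push_neg at hnt
    have hpos := hKeyTop U hnt
    have hle := h1 ⊤ U hsub (fun _ => hA)
    linarith
  have ii_to_iii :
      (∀ (L : Submodule k k) (U : ∀ i : Q0, Submodule k (V i)),
        IsSubrep src tgt V M U →
        (L = ⊤ → ∀ i : {i : Q0 // 0 ≤ θ i}, LinearMap.range (A i) ≤ U i.1) →
        ¬(L = ⊥ ∧ ∀ i, U i = ⊥) → ¬(L = ⊤ ∧ ∀ i, U i = ⊤) →
        EtaPlusVal V θ N L U < 0) →
      (¬ ∃ U : ∀ i : Q0, Submodule k (V i),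
          IsSubrep src tgt V M U ∧ (¬ ∀ i, U i = ⊤) ∧
          (∀ i : {i : Q0 // 0 ≤ θ i}, LinearMap.range (A i) ≤ U i.1)) := by
    intro h2 ⟨U, hsub, hnt, hA⟩
    push_neg at hnt
    have hpos := hKeyTop U hnt
    obtain ⟨j, hj⟩ := hnt
    have hlt := h2 ⊤ U hsub (fun _ => hA)
      (fun h => htopbot h.1) (fun h => hj (h.2 j))
    linarith
  exact ⟨⟨fun h1 => iii_to_ii (i_to_iii h1), fun h2 => iii_to_i (ii_to_iii h2)⟩,
    ⟨ii_to_iii, iii_to_ii⟩⟩
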